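/- Let q be odd and let x ∈ F_q^n satisfy ⟨x,x⟩ = 0 and ⟨x,1⟩ ≠ 0 (1 the all-ones vector), and let U be an LCD code of dimension k−1 contained in x^⊥ ∩ ⟨x⟩^c-complement such that C = ⟨x⟩ ⊕ U with x ⊥ U. Fix a, b ∈ F_q with a ≠ 0, b ≠ 0, a + nb ≠ 0, and set M = aI + bJ. Then with generator matrix G having first row x and remaining rows a generator matrix G' of U, det(G M G^T) = b⟨x,1⟩² · a^{k−1} · det(G' G'^T) ≠ 0; hence C is M-LCD. -/

import Mathlib

open Matrix

theorem hull_dim_one_code_is_M_LCD {F : Type*} [Field F] [Fintype F] {n m : ℕ}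
    (hq : Odd (Fintype.card F))
    (x : Fin n → F) (hxx : x ⬝ᵥ x = 0) (hx1 : x ⬝ᵥ (fun _ => (1 : F)) ≠ 0)
    (G' : Matrix (Fin m) (Fin n) F)
    (hU : (G' * G'ᵀ).det ≠ 0)
    (hxG' : G' *ᵥ x = 0)
    (a b : F) (ha : a ≠ 0) (hb : b ≠ 0) (hab : a + (n : F) * b ≠ 0)
    (M : Matrix (Fin n) (Fin n) F)
    (hM : M = a • (1 : Matrix (Fin n) (Fin n) F) + b • (Matrix.of fun _ _ => (1 : F)))
    (G : Matrix (Fin (m + 1)) (Fin n) F)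
    (hG : G = Matrix.of (Fin.cons x fun i => G' i)) :
    (G * M * Gᵀ).det = b * (x ⬝ᵥ (fun _ => (1 : F))) ^ 2 * a ^ m * (G' * G'ᵀ).det ∧
      (G * M * Gᵀ).det ≠ 0 := by
  classical
  set v1 : Fin n → F := fun _ => (1 : F) with hv1
  set s : F := x ⬝ᵥ v1 with hs
  set w : Fin m → F := fun i => G' i ⬝ᵥ v1 with hw
  -- entrywise formula for G * M * Gᵀ
  have hentry : ∀ i j : Fin (m + 1),
      (G * M * Gᵀ) i j = a * (G i ⬝ᵥ G j) + b * (G i ⬝ᵥ v1) * (G j ⬝ᵥ v1) := by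
    intro i j
    have hJ : (Matrix.of fun _ _ => (1 : F) : Matrix (Fin n) (Fin n) F)
        = vecMulVec v1 v1 := by
      ext i j; simp [vecMulVec_apply, hv1]
    have : G * M * Gᵀ = a • (G * Gᵀ) +
        b • (vecMulVec (G *ᵥ v1) (G *ᵥ v1)) := by
      rw [hM, hJ, Matrix.mul_add, Matrix.add_mul, Matrix.mul_smul,
        Matrix.mul_smul, Matrix.smul_mul, Matrix.smul_mul, Matrix.mul_one,
        vecMulVec_eq (Fin 1), ← Matrix.mul_assoc, Matrix.mul_assoc,
        ← Matrix.replicateCol_mulVec, ← Matrix.replicateRow_vecMul, Matrix.vecMul_transpose,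
        ← vecMulVec_eq (Fin 1)]
    rw [this]
    simp only [Matrix.add_apply, Matrix.smul_apply, mul_apply, vecMulVec_apply,
      transpose_apply, smul_eq_mul, dotProduct, mulVec]
    rw [Finset.mul_sum]
    congr 1
    ring
  -- row identification
  have hrow0 : G 0 = x := by rw [hG]; rfl
  have hrowi : ∀ i : Fin m, G i.succ = G' i := by
    intro i; rw [hG]; rfl
  -- equivalence Fin 1 ⊕ Fin m ≃ Fin (m+1)
  let e : Fin 1 ⊕ Fin m ≃ Fin (m + 1) :=
    { toFun := Sum.elim (fun _ => 0) Fin.succ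
      invFun := Fin.cases (Sum.inl 0) Sum.inr
      left_inv := by
        rintro (i | i)
        · simp [Subsingleton.elim i 0]
        · simp
      right_inv := by
        intro i
        induction i using Fin.cases <;> simp }
  have he0 : ∀ i : Fin 1, e (Sum.inl i) = 0 := fun _ => rfl
  have hei : ∀ i : Fin m, e (Sum.inr i) = i.succ := fun _ => rfl
  -- dot product facts
  have hG'x : ∀ i : Fin m, G' i ⬝ᵥ x = 0 := by
    intro i
    have := congrFun hxG' i
    simpa [mulVec] using this
  have hxG'' : ∀ j : Fin m, x ⬝ᵥ G' j = 0 := by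
    intro j; rw [dotProduct_comm]; exact hG'x j
  -- block decomposition
  have hblock : (G * M * Gᵀ).submatrix e e =
      fromBlocks (Matrix.of fun _ _ => b * s ^ 2)
        (Matrix.of fun _ j => b * s * w j)
        (Matrix.of fun i _ => b * s * w i)
        (Matrix.of fun i j => a * (G' i ⬝ᵥ G' j) + b * (w i * w j)) := by
    ext (i | i) (j | j) <;>
      simp only [submatrix_apply, he0, hei, fromBlocks_apply₁₁, fromBlocks_apply₁₂,
        fromBlocks_apply₂₁, fromBlocks_apply₂₂, Matrix.of_apply, hentry, hrow0, hrowi,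
        hxx, hG'x, hxG'', ← hs, ← hw] <;> ring
  have hbs : b * s ^ 2 ≠ 0 := by
    apply mul_ne_zero hb
    exact pow_ne_zero _ hx1
  -- invertibility of the 1×1 corner
  letI : Invertible (Matrix.of (fun _ _ => b * s ^ 2) : Matrix (Fin 1) (Fin 1) F) :=
    { invOf := Matrix.of fun _ _ => (b * s ^ 2)⁻¹
      invOf_mul_self := by
        ext i j
        fin_cases i <;> fin_cases j
        simp [mul_apply]
        field_simp
      mul_invOf_self := by
        ext i j
        fin_cases i <;> fin_cases j
        simp [mul_apply]
        field_simp }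
  have hdet1 : ((Matrix.of fun _ _ => b * s ^ 2 : Matrix (Fin 1) (Fin 1) F)).det
      = b * s ^ 2 := by simp [Matrix.det_fin_one]
  have hschur : ((Matrix.of fun i j => a * (G' i ⬝ᵥ G' j) + b * (w i * w j)
        : Matrix (Fin m) (Fin m) F) -
      (Matrix.of fun i _ => b * s * w i : Matrix (Fin m) (Fin 1) F) *
        ⅟(Matrix.of fun _ _ => b * s ^ 2 : Matrix (Fin 1) (Fin 1) F) *
        (Matrix.of fun _ j => b * s * w j : Matrix (Fin 1) (Fin m) F)) = a • (G' * G'ᵀ) := by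
    ext i j
    have hinvOf : (⅟(Matrix.of fun _ _ => b * s ^ 2 : Matrix (Fin 1) (Fin 1) F))
        = Matrix.of fun _ _ => (b * s ^ 2)⁻¹ := rfl
    simp only [Matrix.sub_apply, Matrix.smul_apply, mul_apply, hinvOf, Matrix.of_apply,
      Fin.sum_univ_one, smul_eq_mul, transpose_apply]
    have : b * s * w i * (b * s ^ 2)⁻¹ * (b * s * w j) = b * (w i * w j) := by
      field_simp
    rw [this]
    have : G' i ⬝ᵥ G' j = ∑ k, G' i k * G' j k := rfl
    rw [← this]
    ring
  have hdet : (G * M * Gᵀ).det = b * s ^ 2 * a ^ m * (G' * G'ᵀ).det := by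
    rw [← Matrix.det_submatrix_equiv_self e, hblock, Matrix.det_fromBlocks₁₁,
      hschur, hdet1, Matrix.det_smul]
    simp only [Fintype.card_fin]
    ring
  refine ⟨hdet, ?_⟩
  rw [hdet]
  exact mul_ne_zero (mul_ne_zero hbs (pow_ne_zero _ ha)) hU
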